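/- Let S_1, …, S_m be disjoint finite subsets of an integer interval J with |S_j| ≥ s for all j, and let D = diam(∪_j S_j). If edges between integers x, y are present independently with probability 1 − exp(−δ|x−y|^{−α}), then for every pair i ≠ j the probability that some edge connects S_i and S_j is at least q := 1 − exp(−δ s² D^{−α}). Consequently the induced graph on {1,…,m} (with ij an edge iff some edge joins S_i to S_j) stochastically dominates the Erdős–Rényi graph G(m, q). -/

import Mathlib

open MeasureTheory

/-- The Bernoulli measure on `Bool` with parameter `p ∈ [0,1]` (clamped at `1`). -/
noncomputable def bern (p : ℝ) : Measure Bool :=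
  (PMF.bernoulli (min (Real.toNNReal p) 1) (min_le_right _ _)).toMeasure

/-- The edge set of the complete graph on `Fin m`: pairs `i < j`. -/
abbrev EdgeIdx (m : ℕ) := {p : Fin m × Fin m // p.1 < p.2}


/-! ### Auxiliary lemmas -/

section Aux

open MeasureTheory

lemma measAll {X : Type*} [Countable X] [MeasurableSpace X] [MeasurableSingletonClass X]
    (s : Set X) : MeasurableSet s := s.to_countable.measurableSet

instance bern_isProbabilityMeasure (p : ℝ) : IsProbabilityMeasure (bern p) := by
  unfold bern; infer_instance

lemma bern_true {p : ℝ} (h1 : p ≤ 1) : bern p {true} = ENNReal.ofReal p := by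
  rw [bern, PMF.toMeasure_apply_singleton _ _ (measurableSet_singleton _)]
  simp [PMF.bernoulli_apply, min_eq_left (Real.toNNReal_le_one.2 h1)]
  rfl

lemma bern_false {p : ℝ} (h0 : 0 ≤ p) (h1 : p ≤ 1) :
    bern p {false} = ENNReal.ofReal (1 - p) := by
  rw [bern, PMF.toMeasure_apply_singleton _ _ (measurableSet_singleton _)]
  simp only [PMF.bernoulli_apply, min_eq_left (Real.toNNReal_le_one.2 h1), Bool.cond_false]
  rw [ENNReal.ofReal_sub _ h0, ENNReal.ofReal_one]
  rw [ENNReal.coe_sub, ENNReal.coe_one]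
  rfl

lemma bool_meas_ext {μ ν : Measure Bool} [IsProbabilityMeasure μ] [IsProbabilityMeasure ν]
    (h : μ {true} = ν {true}) : μ = ν := by
  refine Measure.ext_of_singleton fun b => ?_
  cases b
  · have ht : ({false} : Set Bool) = {true}ᶜ := by ext b; cases b <;> simp
    rw [ht, prob_compl_eq_one_sub (measAll _), prob_compl_eq_one_sub (measAll _), h]
  · exact h

section indep
variable {ι : Type*} [Fintype ι]
variable (μ : ι → Measure Bool) [∀ i, IsProbabilityMeasure (μ i)]

lemma pi_inter_eq_mul (s : Set ι) (C D : Set (ι → Bool))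
    (hC : ∀ x y : ι → Bool, (∀ i ∈ s, x i = y i) → x ∈ C → y ∈ C)
    (hD : ∀ x y : ι → Bool, (∀ i ∉ s, x i = y i) → x ∈ D → y ∈ D) :
    Measure.pi μ (C ∩ D) = Measure.pi μ C * Measure.pi μ D := by
  classical
  set p : ι → Prop := fun i => i ∈ s with hp
  let e := MeasurableEquiv.piEquivPiSubtypeProd (fun _ : ι => Bool) p
  have mp := measurePreserving_piEquivPiSubtypeProd μ p
  set A : Set (∀ _ : Subtype p, Bool) :=
    {u | (fun i => if h : p i then u ⟨i, h⟩ else false) ∈ C} with hA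
  set B : Set (∀ _ : {i // ¬ p i}, Bool) :=
    {v | (fun i => if h : p i then false else v ⟨i, h⟩) ∈ D} with hB
  have hCe : C = e ⁻¹' (A ×ˢ Set.univ) := by
    ext x
    simp only [Set.mem_preimage, Set.mem_prod, Set.mem_univ, and_true]
    have hagree : ∀ i ∈ s, x i = (fun i => if h : p i then x i else false) i := by
      intro i hi; simp [hp, hi]
    constructor
    · intro hx
      exact hC x _ hagree hx
    · intro hx
      exact hC _ x (fun i hi => (hagree i hi).symm) hx
  have hDe : D = e ⁻¹' (Set.univ ×ˢ B) := by
    ext x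
    simp only [Set.mem_preimage, Set.mem_prod, Set.mem_univ, true_and]
    have hagree : ∀ i ∉ s, x i = (fun i => if h : p i then false else x i) i := by
      intro i hi; simp [hp, hi]
    constructor
    · intro hx
      exact hD x _ hagree hx
    · intro hx
      exact hD _ x (fun i hi => (hagree i hi).symm) hx
  have hCD : C ∩ D = e ⁻¹' (A ×ˢ B) := by
    rw [hCe, hDe, ← Set.preimage_inter, Set.prod_inter_prod, Set.univ_inter, Set.inter_univ]
  rw [hCD, hCe, hDe, mp.measure_preimage (measAll _).nullMeasurableSet,
    mp.measure_preimage (measAll _).nullMeasurableSet,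
    mp.measure_preimage (measAll _).nullMeasurableSet,
    Measure.prod_prod, Measure.prod_prod, Measure.prod_prod, measure_univ, measure_univ,
    mul_one, one_mul]

lemma pi_iInter_eq_prod {κ : Type*} [DecidableEq κ] (T : κ → Set ι)
    (hT : Pairwise (Function.onFun Disjoint T)) (C : κ → Set (ι → Bool))
    (hC : ∀ k (x y : ι → Bool), (∀ i ∈ T k, x i = y i) → x ∈ C k → y ∈ C k)
    (t : Finset κ) : Measure.pi μ (⋂ k ∈ t, C k) = ∏ k ∈ t, Measure.pi μ (C k) := by
  classical
  induction t using Finset.induction_on with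
  | empty => simp
  | @insert a t ha ih =>
    rw [Finset.set_biInter_insert, Finset.prod_insert ha, ← ih]
    apply pi_inter_eq_mul μ (T a)
    · exact hC a
    · intro x y hagree hx
      simp only [Set.mem_iInter] at hx ⊢
      intro k hk
      refine hC k x y (fun i hi => hagree i ?_) (hx k hk)
      intro his
      exact (hT (fun h : k = a => ha (h ▸ hk))).le_bot ⟨hi, his⟩

lemma pi_map_blocks {κ : Type*} [Fintype κ] [DecidableEq κ] (T : κ → Set ι)
    (hT : Pairwise (Function.onFun Disjoint T)) (G : κ → (ι → Bool) → Bool)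
    (hG : ∀ k (x y : ι → Bool), (∀ i ∈ T k, x i = y i) → G k x = G k y) :
    (Measure.pi μ).map (fun x k => G k x) = Measure.pi (fun k => (Measure.pi μ).map (G k)) := by
  classical
  refine Measure.ext_of_singleton fun g => ?_
  rw [Measure.map_apply (measurable_of_countable _) (measAll _)]
  have h1 : (fun x k => G k x) ⁻¹' {g} = ⋂ k ∈ Finset.univ, (G k ⁻¹' {g k}) := by
    ext x
    simp [funext_iff]
  rw [h1, pi_iInter_eq_prod μ T hT _ (fun k x y h hx => by
      simpa [Set.mem_preimage, ← hG k x y h] using hx)]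
  have h2 : ({g} : Set (κ → Bool)) = Set.pi Set.univ (fun k => {g k}) := by
    ext x; simp [funext_iff, Set.mem_pi]
  rw [h2, Measure.pi_pi]
  exact Finset.prod_congr rfl fun k _ => by
    rw [Measure.map_apply (measurable_of_countable _) (measAll _)]

lemma pi_forall_eq (t : Finset ι) (b : ι → Bool) :
    Measure.pi μ {x | ∀ i ∈ t, x i = b i} = ∏ i ∈ t, μ i {b i} := by
  classical
  have h1 : {x : ι → Bool | ∀ i ∈ t, x i = b i}
      = Set.pi Set.univ (fun i => if i ∈ t then {b i} else Set.univ) := by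
    ext x
    simp only [Set.mem_setOf_eq, Set.mem_pi, Set.mem_univ, forall_true_left]
    constructor
    · intro h i; split <;> simp_all
    · intro h i hi; have := h i; simp_all
  rw [h1, Measure.pi_pi]
  rw [Finset.prod_congr rfl (fun i (_ : i ∈ Finset.univ) => apply_ite (μ i) _ _ _)]
  simp only [measure_univ]
  rw [Finset.prod_ite_mem, Finset.univ_inter]

end indep

/-- The type of ordered pairs of elements of `U`. -/
abbrev EP (U : Finset ℤ) : Type := {e : ↥U × ↥U // (e.1 : ℤ) < (e.2 : ℤ)}

/-- The connecting condition between `S i` and `S j`. -/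
abbrev econd {m : ℕ} (S : Fin m → Finset ℤ) {U : Finset ℤ} (i j : Fin m) (e : EP U) : Prop :=
  ((e.1.1 : ℤ) ∈ S i ∧ (e.1.2 : ℤ) ∈ S j) ∨ ((e.1.1 : ℤ) ∈ S j ∧ (e.1.2 : ℤ) ∈ S i)

/-- The set of pairs connecting `S i` and `S j`. -/
def eB {m : ℕ} (S : Fin m → Finset ℤ) (U : Finset ℤ) (i j : Fin m) : Finset (EP U) :=
  Finset.univ.filter (fun e => econd S i j e)

lemma mem_eB {m : ℕ} {S : Fin m → Finset ℤ} {U : Finset ℤ} {i j : Fin m} {e : EP U} :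
    e ∈ eB S U i j ↔ econd S i j e := by simp [eB]

lemma class_eq {m : ℕ} {S : Fin m → Finset ℤ}
    (hdisj : ∀ i j : Fin m, i ≠ j → Disjoint (S i) (S j)) {x : ℤ} {a b : Fin m}
    (ha : x ∈ S a) (hb : x ∈ S b) : a = b := by
  by_contra hne; exact Finset.disjoint_left.1 (hdisj a b hne) ha hb

lemma eB_unique {m : ℕ} {S : Fin m → Finset ℤ}
    (hdisj : ∀ i j : Fin m, i ≠ j → Disjoint (S i) (S j)) {U : Finset ℤ}
    {i j k l : Fin m} (hij : i < j) (hkl : k < l) {e : EP U}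
    (h1 : econd S i j e) (h2 : econd S k l e) : i = k ∧ j = l := by
  rcases h1 with ⟨ha, hb⟩ | ⟨ha, hb⟩ <;> rcases h2 with ⟨hc, hd⟩ | ⟨hc, hd⟩
  · exact ⟨class_eq hdisj ha hc, class_eq hdisj hb hd⟩
  · exfalso
    have e1 : (i : ℕ) < j := hij
    have e2 : (k : ℕ) < l := hkl
    have e3 : (i : ℕ) = (l : ℕ) := congrArg Fin.val (class_eq hdisj ha hc)
    have e4 : (j : ℕ) = (k : ℕ) := congrArg Fin.val (class_eq hdisj hb hd)
    omega
  · exfalso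
    have e1 : (i : ℕ) < j := hij
    have e2 : (k : ℕ) < l := hkl
    have e3 : (j : ℕ) = (k : ℕ) := congrArg Fin.val (class_eq hdisj ha hc)
    have e4 : (i : ℕ) = (l : ℕ) := congrArg Fin.val (class_eq hdisj hb hd)
    omega
  · exact ⟨class_eq hdisj hb hd, class_eq hdisj ha hc⟩

lemma card_eB {m : ℕ} {S : Fin m → Finset ℤ}
    (hdisj : ∀ i j : Fin m, i ≠ j → Disjoint (S i) (S j)) {s : ℕ}
    (hcard : ∀ j, s ≤ (S j).card) {U : Finset ℤ}
    (hU : U = (Finset.univ : Finset (Fin m)).biUnion S) {i j : Fin m} (hij : i ≠ j) :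
    s ^ 2 ≤ (eB S U i j).card := by
  classical
  have hmemU : ∀ {a : Fin m} {x : ℤ}, x ∈ S a → x ∈ U := by
    intro a x hx; rw [hU]; exact Finset.mem_biUnion.2 ⟨a, Finset.mem_univ _, hx⟩
  have hsurj : Set.SurjOn
      (fun e : EP U => if ((e.1.1 : ℤ)) ∈ S i then (((e.1.1 : ℤ)), ((e.1.2 : ℤ)))
        else (((e.1.2 : ℤ)), ((e.1.1 : ℤ))))
      ↑(eB S U i j) ↑(S i ×ˢ S j) := by
    rintro ⟨x, y⟩ hxy
    rw [Finset.mem_coe, Finset.mem_product] at hxy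
    obtain ⟨hx, hy⟩ := hxy
    have hxU := hmemU hx
    have hyU := hmemU hy
    have hxy_ne : x ≠ y := fun hEq => Finset.disjoint_left.1 (hdisj i j hij) hx (hEq ▸ hy)
    rcases lt_or_gt_of_ne hxy_ne with hlt | hgt
    · refine ⟨⟨(⟨x, hxU⟩, ⟨y, hyU⟩), hlt⟩, ?_, ?_⟩
      · exact Finset.mem_coe.2 (mem_eB.2 (Or.inl ⟨hx, hy⟩))
      · simp [hx]
    · refine ⟨⟨(⟨y, hyU⟩, ⟨x, hxU⟩), hgt⟩, ?_, ?_⟩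
      · exact Finset.mem_coe.2 (mem_eB.2 (Or.inr ⟨hy, hx⟩))
      · have hyni : (y : ℤ) ∉ S i := fun hyi => Finset.disjoint_left.1 (hdisj i j hij) hyi hy
        simp [hyni]
  have hle := Finset.card_le_card_of_surjOn _ hsurj
  calc s ^ 2 = s * s := sq s
    _ ≤ (S i).card * (S j).card := Nat.mul_le_mul (hcard i) (hcard j)
    _ = (S i ×ˢ S j).card := (Finset.card_product _ _).symm
    _ ≤ _ := hle

end Aux

set_option maxHeartbeats 2000000 in
private theorem main_aux {m : ℕ} (S : Fin m → Finset ℤ)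
    (hdisj : ∀ i j : Fin m, i ≠ j → Disjoint (S i) (S j))
    (s : ℕ) (hs : 1 ≤ s) (hcard : ∀ j, s ≤ (S j).card)
    (δ α D : ℝ) (hδ : 0 < δ) (hα : 1 < α) (hD : 0 < D)
    (U : Finset ℤ) (hU : U = (Finset.univ : Finset (Fin m)).biUnion S)
    (hdiam : ∀ x ∈ U, ∀ y ∈ U, |(x : ℝ) - (y : ℝ)| ≤ D) :
    (∀ i j : Fin m, i ≠ j →
      ENNReal.ofReal (1 - Real.exp (-δ * (s : ℝ) ^ 2 * D ^ (-α))) ≤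
        (Measure.pi fun e : EP U =>
          bern (1 - Real.exp (-δ * |((e.1.1 : ℤ) : ℝ) - ((e.1.2 : ℤ) : ℝ)| ^ (-α))))
          {f | ∃ e : EP U,
            (((e.1.1 : ℤ) ∈ S i ∧ (e.1.2 : ℤ) ∈ S j) ∨
             ((e.1.1 : ℤ) ∈ S j ∧ (e.1.2 : ℤ) ∈ S i)) ∧ f e = true}) ∧
    ∃ ρ : Measure ((EdgeIdx m → Bool) × (EdgeIdx m → Bool)),
      IsProbabilityMeasure ρ ∧
      ρ.map Prod.fst = Measure.pi (fun _ : EdgeIdx m =>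
        bern (1 - Real.exp (-δ * (s : ℝ) ^ 2 * D ^ (-α)))) ∧
      ρ.map Prod.snd = (Measure.pi fun e : EP U =>
          bern (1 - Real.exp (-δ * |((e.1.1 : ℤ) : ℝ) - ((e.1.2 : ℤ) : ℝ)| ^ (-α)))).map
        (fun f (ij : EdgeIdx m) =>
          decide (∃ e : EP U,
            (((e.1.1 : ℤ) ∈ S ij.1.1 ∧ (e.1.2 : ℤ) ∈ S ij.1.2) ∨
             ((e.1.1 : ℤ) ∈ S ij.1.2 ∧ (e.1.2 : ℤ) ∈ S ij.1.1)) ∧ f e = true)) ∧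
      ∀ᵐ z ∂ρ, ∀ e, z.1 e ≤ z.2 e := by
  set q : ℝ := 1 - Real.exp (-δ * (s : ℝ) ^ 2 * D ^ (-α)) with hqdef
  set h : (EP U → Bool) → EdgeIdx m → Bool := fun f (ij : EdgeIdx m) =>
    decide (∃ e : EP U,
      (((e.1.1 : ℤ) ∈ S ij.1.1 ∧ (e.1.2 : ℤ) ∈ S ij.1.2) ∨
       ((e.1.1 : ℤ) ∈ S ij.1.2 ∧ (e.1.2 : ℤ) ∈ S ij.1.1)) ∧ f e = true) with hh
  set Ppi : Measure (EP U → Bool) := Measure.pi fun e : EP U =>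
    bern (1 - Real.exp (-δ * |((e.1.1 : ℤ) : ℝ) - ((e.1.2 : ℤ) : ℝ)| ^ (-α))) with hPpi
  set d : EP U → ℝ := fun e => |((e.1.1 : ℤ) : ℝ) - ((e.1.2 : ℤ) : ℝ)| with hd
  have hPpi' : Ppi = Measure.pi fun e : EP U => bern (1 - Real.exp (-δ * d e ^ (-α))) := rfl
  haveI : IsProbabilityMeasure Ppi := by rw [hPpi]; infer_instance
  -- basic real estimates
  have hd_pos : ∀ e : EP U, 0 < d e := by
    intro e
    have h1 : ((e.1.1 : ℤ) : ℝ) < ((e.1.2 : ℤ) : ℝ) := by exact_mod_cast e.2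
    rw [hd]
    dsimp only
    rw [abs_pos]
    intro hzero
    rw [sub_eq_zero] at hzero
    exact absurd hzero (ne_of_lt h1)
  have hd_le : ∀ e : EP U, d e ≤ D := fun e => hdiam _ e.1.1.2 _ e.1.2.2
  have hα0 : (0:ℝ) ≤ α := by linarith
  have hrpow : ∀ e : EP U, D ^ (-α) ≤ d e ^ (-α) := fun e =>
    Real.rpow_le_rpow_of_nonpos (hd_pos e) (hd_le e) (neg_nonpos.2 hα0)
  have hDα_pos : (0:ℝ) < D ^ (-α) := Real.rpow_pos_of_pos hD _
  have hterm_pos : ∀ e : EP U, (0:ℝ) < δ * d e ^ (-α) :=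
    fun e => mul_pos hδ (Real.rpow_pos_of_pos (hd_pos e) _)
  have hpe0 : ∀ e : EP U, (0:ℝ) ≤ 1 - Real.exp (-δ * d e ^ (-α)) := by
    intro e
    have : Real.exp (-δ * d e ^ (-α)) ≤ 1 := by
      rw [Real.exp_le_one_iff]
      nlinarith [hterm_pos e]
    linarith
  have hpe1 : ∀ e : EP U, 1 - Real.exp (-δ * d e ^ (-α)) ≤ 1 := by
    intro e
    have := Real.exp_pos (-δ * d e ^ (-α))
    linarith
  have hq0 : (0:ℝ) ≤ q := by
    rw [hqdef]
    have hE : Real.exp (-δ * (s : ℝ) ^ 2 * D ^ (-α)) ≤ 1 := by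
      rw [Real.exp_le_one_iff]
      have h0 : (0:ℝ) ≤ δ * (s : ℝ) ^ 2 * D ^ (-α) := by positivity
      linarith
    linarith
  have hq1 : q ≤ 1 := by
    rw [hqdef]
    have := Real.exp_pos (-δ * (s : ℝ) ^ 2 * D ^ (-α))
    linarith
  set σ : Fin m → Fin m → ℝ := fun i j => ∑ e ∈ eB S U i j, δ * d e ^ (-α) with hσdef
  have hσ_ge : ∀ i j : Fin m, i ≠ j → δ * (s : ℝ) ^ 2 * D ^ (-α) ≤ σ i j := by
    intro i j hij
    have hcard' := card_eB hdisj hcard hU hij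
    have h1 : (eB S U i j).card • (δ * D ^ (-α)) ≤ σ i j :=
      Finset.card_nsmul_le_sum _ _ _
        (fun e _ => mul_le_mul_of_nonneg_left (hrpow e) hδ.le)
    rw [nsmul_eq_mul] at h1
    have h2 : ((s : ℝ)) ^ 2 ≤ ((eB S U i j).card : ℝ) := by
      have := (Nat.cast_le (α := ℝ)).2 hcard'
      push_cast at this
      linarith
    nlinarith [mul_nonneg hδ.le hDα_pos.le]
  have hexpσ : ∀ i j : Fin m, i ≠ j →
      Real.exp (-σ i j) ≤ Real.exp (-δ * (s : ℝ) ^ 2 * D ^ (-α)) := by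
    intro i j hij
    exact Real.exp_le_exp.2 (by have := hσ_ge i j hij; linarith)
  have hσ_pos : ∀ i j : Fin m, i ≠ j → 0 < σ i j := by
    intro i j hij
    refine Finset.sum_pos (fun e _ => hterm_pos e) ?_
    refine Finset.card_pos.1 (lt_of_lt_of_le ?_ (card_eB hdisj hcard hU hij))
    positivity
  -- the product of failure probabilities
  have hprodfalse : ∀ i j : Fin m,
      (∏ e ∈ eB S U i j, bern (1 - Real.exp (-δ * d e ^ (-α))) {false})
        = ENNReal.ofReal (Real.exp (-σ i j)) := by
    intro i j
    have hfac : ∀ e ∈ eB S U i j, bern (1 - Real.exp (-δ * d e ^ (-α))) {false}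
        = ENNReal.ofReal (Real.exp (-(δ * d e ^ (-α)))) := by
      intro e _
      rw [bern_false (hpe0 e) (hpe1 e), sub_sub_cancel, neg_mul]
    rw [Finset.prod_congr rfl hfac,
      ← ENNReal.ofReal_prod_of_nonneg (fun e _ => (Real.exp_pos _).le),
      ← Real.exp_sum, Finset.sum_neg_distrib]
  have hfalse : ∀ i j : Fin m, Ppi {f | ∀ e ∈ eB S U i j, f e = false}
      = ENNReal.ofReal (Real.exp (-σ i j)) := by
    intro i j
    rw [hPpi', pi_forall_eq]
    exact hprodfalse i j
  have hPtrue : ∀ i j : Fin m, i ≠ j →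
      Ppi {f | ∃ e : EP U, econd S i j e ∧ f e = true}
        = 1 - ENNReal.ofReal (Real.exp (-σ i j)) := by
    intro i j hij
    have hset : {f : EP U → Bool | ∃ e : EP U, econd S i j e ∧ f e = true}
        = {f | ∀ e ∈ eB S U i j, f e = false}ᶜ := by
      ext f
      simp only [Set.mem_setOf_eq, Set.mem_compl_iff]
      constructor
      · rintro ⟨e, hc, ht⟩ hall
        rw [hall e (mem_eB.2 hc)] at ht
        simp at ht
      · intro hne
        push_neg at hne
        obtain ⟨e, he, hf⟩ := hne
        exact ⟨e, mem_eB.1 he, Bool.ne_false_iff.1 hf⟩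
    rw [hset, prob_compl_eq_one_sub (measAll _), hfalse i j]
  have hofq : ENNReal.ofReal q
      = 1 - ENNReal.ofReal (Real.exp (-δ * (s : ℝ) ^ 2 * D ^ (-α))) := by
    rw [hqdef, ENNReal.ofReal_sub _ (Real.exp_pos _).le, ENNReal.ofReal_one]
  constructor
  · -- part 1
    intro i j hij
    refine le_trans ?_ (le_of_eq (hPtrue i j hij).symm)
    rw [hofq]
    exact tsub_le_tsub_left (ENNReal.ofReal_le_ofReal (hexpσ i j hij)) 1
  · -- part 2 : the coupling
    set pp : EdgeIdx m → ℝ := fun ij => 1 - Real.exp (-σ ij.1.1 ij.1.2) with hpp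
    set rr : EdgeIdx m → ℝ := fun ij => q / pp ij with hrr
    have hij_ne : ∀ ij : EdgeIdx m, ij.1.1 ≠ ij.1.2 := fun ij => ne_of_lt ij.2
    have hpp_pos : ∀ ij : EdgeIdx m, 0 < pp ij := by
      intro ij
      have h1 := hσ_pos _ _ (hij_ne ij)
      have h2 : Real.exp (-σ ij.1.1 ij.1.2) < 1 := Real.exp_lt_one_iff.2 (by linarith)
      rw [hpp]; dsimp only; linarith
    have hpp1 : ∀ ij : EdgeIdx m, pp ij ≤ 1 := by
      intro ij
      have := Real.exp_pos (-σ ij.1.1 ij.1.2)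
      rw [hpp]; dsimp only; linarith
    have hqpp : ∀ ij : EdgeIdx m, q ≤ pp ij := by
      intro ij
      have := hexpσ _ _ (hij_ne ij)
      rw [hqdef, hpp]; dsimp only; linarith
    have hrr0 : ∀ ij : EdgeIdx m, 0 ≤ rr ij :=
      fun ij => div_nonneg hq0 (hpp_pos ij).le
    have hrr1 : ∀ ij : EdgeIdx m, rr ij ≤ 1 :=
      fun ij => (div_le_one (hpp_pos ij)).2 (hqpp ij)
    have hpprr : ∀ ij : EdgeIdx m, pp ij * rr ij = q := by
      intro ij
      rw [hrr]; dsimp only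
      rw [mul_comm, div_mul_cancel₀ _ (ne_of_gt (hpp_pos ij))]
    set pfun : EP U ⊕ EdgeIdx m → ℝ :=
      Sum.elim (fun e => 1 - Real.exp (-δ * d e ^ (-α))) rr with hpfun
    set ν : Measure (EP U ⊕ EdgeIdx m → Bool) := Measure.pi (fun a => bern (pfun a)) with hν
    haveI : IsProbabilityMeasure ν := by rw [hν]; infer_instance
    set G : EdgeIdx m → (EP U ⊕ EdgeIdx m → Bool) → Bool :=
      fun ij x => h (fun e => x (Sum.inl e)) ij && x (Sum.inr ij) with hG
    set F : (EP U ⊕ EdgeIdx m → Bool) → (EdgeIdx m → Bool) × (EdgeIdx m → Bool) :=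
      fun x => (fun ij => G ij x, h (fun e => x (Sum.inl e))) with hF
    refine ⟨ν.map F, Measure.isProbabilityMeasure_map (measurable_of_countable F).aemeasurable,
      ?_, ?_, ?_⟩
    · -- first marginal
      set T : EdgeIdx m → Set (EP U ⊕ EdgeIdx m) := fun ij =>
        Sum.inl '' ↑(eB S U ij.1.1 ij.1.2) ∪ {Sum.inr ij} with hT
      have hTdisj : Pairwise (Function.onFun Disjoint T) := by
        intro ij kl hne
        rw [Function.onFun, Set.disjoint_left]
        rintro a (⟨e, he, rfl⟩ | rfl)
        · rintro (⟨e', he', heq⟩ | habs)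
          · apply hne
            obtain rfl : e' = e := Sum.inl.inj heq
            obtain ⟨h1, h2⟩ := eB_unique hdisj ij.2 kl.2
              (mem_eB.1 (Finset.mem_coe.1 he)) (mem_eB.1 (Finset.mem_coe.1 he'))
            exact Subtype.ext (Prod.ext h1 h2)
          · simp at habs
        · rintro (⟨e', he', heq⟩ | habs)
          · simp at heq
          · exact hne (Sum.inr.inj habs)
      have hGdep : ∀ (ij : EdgeIdx m) (x y : EP U ⊕ EdgeIdx m → Bool),
          (∀ a ∈ T ij, x a = y a) → G ij x = G ij y := by
        intro ij x y hxy
        have h2 : x (Sum.inr ij) = y (Sum.inr ij) := hxy _ (Or.inr rfl)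
        have h1 : h (fun e => x (Sum.inl e)) ij = h (fun e => y (Sum.inl e)) ij := by
          rw [hh]
          dsimp only
          refine decide_eq_decide.2 ⟨?_, ?_⟩
          · rintro ⟨e, hc, ht⟩
            refine ⟨e, hc, ?_⟩
            rw [← hxy (Sum.inl e) (Or.inl ⟨e, Finset.mem_coe.2 (mem_eB.2 hc), rfl⟩)]
            exact ht
          · rintro ⟨e, hc, ht⟩
            refine ⟨e, hc, ?_⟩
            rw [hxy (Sum.inl e) (Or.inl ⟨e, Finset.mem_coe.2 (mem_eB.2 hc), rfl⟩)]
            exact ht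
        rw [hG]
        dsimp only
        rw [h1, h2]
      have hblocks : ν.map (fun x ij => G ij x)
          = Measure.pi (fun ij => ν.map (G ij)) := by
        rw [hν]
        exact pi_map_blocks _ T hTdisj G hGdep
      have hmarg : ∀ ij : EdgeIdx m, ν.map (G ij) = bern q := by
        intro ij
        haveI : IsProbabilityMeasure (ν.map (G ij)) :=
          Measure.isProbabilityMeasure_map (measurable_of_countable _).aemeasurable
        refine bool_meas_ext ?_
        rw [Measure.map_apply (measurable_of_countable _) (measAll _)]
        have hpre : G ij ⁻¹' {true}
            = {x : EP U ⊕ EdgeIdx m → Bool | h (fun e => x (Sum.inl e)) ij = true}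
              ∩ {x | x (Sum.inr ij) = true} := by
          ext x
          simp [hG, Bool.and_eq_true]
        have hCpart : ν {x : EP U ⊕ EdgeIdx m → Bool | h (fun e => x (Sum.inl e)) ij = true}
            = ENNReal.ofReal (pp ij) := by
          have hcompl : {x : EP U ⊕ EdgeIdx m → Bool | h (fun e => x (Sum.inl e)) ij = true}ᶜ
              = {x | ∀ a ∈ (eB S U ij.1.1 ij.1.2).image Sum.inl, x a = false} := by
            ext x
            simp only [Set.mem_compl_iff, Set.mem_setOf_eq, hh, decide_eq_true_eq,
              Finset.mem_image]
            constructor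
            · intro hne a ha
              obtain ⟨e, he, rfl⟩ := ha
              push_neg at hne
              have := hne e (mem_eB.1 he)
              exact Bool.not_eq_true _ ▸ this
            · rintro hall ⟨e, hc, ht⟩
              have := hall (Sum.inl e) ⟨e, mem_eB.2 hc, rfl⟩
              rw [this] at ht
              simp at ht
          have hcm : ν {x : EP U ⊕ EdgeIdx m → Bool |
              ∀ a ∈ (eB S U ij.1.1 ij.1.2).image Sum.inl, x a = false}
                = ENNReal.ofReal (Real.exp (-σ ij.1.1 ij.1.2)) := by
            rw [hν]
            have hb : {x : EP U ⊕ EdgeIdx m → Bool |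
                ∀ a ∈ (eB S U ij.1.1 ij.1.2).image Sum.inl, x a = false}
                  = {x | ∀ a ∈ (eB S U ij.1.1 ij.1.2).image Sum.inl,
                      x a = (fun _ => false) a} := rfl
            rw [hb, pi_forall_eq, Finset.prod_image (fun a _ b _ hab => Sum.inl.inj hab)]
            exact hprodfalse ij.1.1 ij.1.2
          have hcompl' := prob_compl_eq_one_sub (μ := ν)
            (measAll {x : EP U ⊕ EdgeIdx m → Bool | h (fun e => x (Sum.inl e)) ij = true})
          rw [hcompl, hcm] at hcompl'
          have hle : ν {x : EP U ⊕ EdgeIdx m → Bool | h (fun e => x (Sum.inl e)) ij = true} ≤ 1 :=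
            prob_le_one
          have : ν {x : EP U ⊕ EdgeIdx m → Bool | h (fun e => x (Sum.inl e)) ij = true}
              = 1 - ENNReal.ofReal (Real.exp (-σ ij.1.1 ij.1.2)) := by
            rw [hcompl', ENNReal.sub_sub_cancel ENNReal.one_ne_top hle]
          rw [this, hpp]
          dsimp only
          rw [ENNReal.ofReal_sub _ (Real.exp_pos _).le, ENNReal.ofReal_one]
        have hDpart : ν {x : EP U ⊕ EdgeIdx m → Bool | x (Sum.inr ij) = true}
            = ENNReal.ofReal (rr ij) := by
          have hb : {x : EP U ⊕ EdgeIdx m → Bool | x (Sum.inr ij) = true}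
              = {x | ∀ a ∈ ({Sum.inr ij} : Finset (EP U ⊕ EdgeIdx m)),
                  x a = (fun _ => true) a} := by
            ext x; simp
          rw [hb, hν, pi_forall_eq, Finset.prod_singleton]
          exact bern_true (hrr1 ij)
        rw [hpre, hν, pi_inter_eq_mul _ (Set.range (Sum.inl : EP U → EP U ⊕ EdgeIdx m)) _ _
          ?_ ?_]
        · rw [← hν, hCpart, hDpart, ← ENNReal.ofReal_mul (hpp_pos ij).le, hpprr ij]
          exact (bern_true hq1).symm
        · intro x y hxy hx
          simp only [Set.mem_setOf_eq] at hx ⊢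
          rw [hh] at hx ⊢
          simp only [decide_eq_true_eq] at hx ⊢
          obtain ⟨e, hc, ht⟩ := hx
          exact ⟨e, hc, by rw [← hxy (Sum.inl e) ⟨e, rfl⟩]; exact ht⟩
        · intro x y hxy hx
          simp only [Set.mem_setOf_eq] at hx ⊢
          rw [← hxy (Sum.inr ij) (by simp)]
          exact hx
      have hfinal : (ν.map F).map Prod.fst = ν.map (fun x ij => G ij x) := by
        rw [Measure.map_map measurable_fst (measurable_of_countable _)]
        rfl
      rw [hfinal, hblocks]
      exact congrArg Measure.pi (funext fun ij => hmarg ij)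
    · -- second marginal
      rw [Measure.map_map measurable_snd (measurable_of_countable _)]
      have hcomp1 : (Prod.snd ∘ F) = h ∘ (fun x (e : EP U) => x (Sum.inl e)) := rfl
      rw [hcomp1, ← Measure.map_map (measurable_of_countable h) (measurable_of_countable _)]
      congr 1
      have mp := measurePreserving_sumPiEquivProdPi
        (X := fun _ : EP U ⊕ EdgeIdx m => Bool) (fun a => bern (pfun a))
      have hcomp2 : (fun x (e : EP U) => x (Sum.inl e))
          = Prod.fst ∘ (MeasurableEquiv.sumPiEquivProdPi
              (fun _ : EP U ⊕ EdgeIdx m => Bool)) := rfl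
      rw [hν, hcomp2, ← Measure.map_map measurable_fst (MeasurableEquiv.measurable _),
        mp.map_eq, Measure.map_fst_prod, measure_univ, one_smul, hPpi']
      rfl
    · -- monotonicity
      refine (ae_map_iff (measurable_of_countable F).aemeasurable (measAll _)).2
        (ae_of_all _ ?_)
      intro x e
      rw [hF]
      dsimp only
      rw [hG]
      dsimp only
      exact Bool.and_le_left _ _


/-- Disjoint sets `S 1, …, S m ⊆ ℤ` with `|S j| ≥ s` and union of diameter `≤ D`:
with independent edges between integers present with probability `1 - exp (-δ|x-y|⁻ᵅ)`,
each pair `i ≠ j` is connected by some edge with probability at least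
`q = 1 - exp (-δ s² D⁻ᵅ)`, and the induced graph on `{1, …, m}` stochastically
dominates the Erdős–Rényi graph `G(m, q)`. -/
theorem stmt_7 (m : ℕ) (S : Fin m → Finset ℤ)
    (hdisj : ∀ i j : Fin m, i ≠ j → Disjoint (S i) (S j))
    (s : ℕ) (hs : 1 ≤ s) (hcard : ∀ j, s ≤ (S j).card)
    (δ α D : ℝ) (hδ : 0 < δ) (hα : 1 < α) (hD : 0 < D)
    (U : Finset ℤ) (hU : U = (Finset.univ : Finset (Fin m)).biUnion S)
    (hdiam : ∀ x ∈ U, ∀ y ∈ U, |(x : ℝ) - (y : ℝ)| ≤ D)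
    (q : ℝ) (hq : q = 1 - Real.exp (-δ * (s : ℝ) ^ 2 * D ^ (-α)))
    (P : Measure ({e : ↥U × ↥U // (e.1 : ℤ) < (e.2 : ℤ)} → Bool))
    (hP : P = Measure.pi fun e : {e : ↥U × ↥U // (e.1 : ℤ) < (e.2 : ℤ)} =>
      bern (1 - Real.exp (-δ * |((e.1.1 : ℤ) : ℝ) - ((e.1.2 : ℤ) : ℝ)| ^ (-α)))) :
    (∀ i j : Fin m, i ≠ j →
      ENNReal.ofReal q ≤ P {f | ∃ e : {e : ↥U × ↥U // (e.1 : ℤ) < (e.2 : ℤ)},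
        (((e.1.1 : ℤ) ∈ S i ∧ (e.1.2 : ℤ) ∈ S j) ∨
         ((e.1.1 : ℤ) ∈ S j ∧ (e.1.2 : ℤ) ∈ S i)) ∧ f e = true}) ∧
    ∃ ρ : Measure ((EdgeIdx m → Bool) × (EdgeIdx m → Bool)),
      IsProbabilityMeasure ρ ∧
      ρ.map Prod.fst = Measure.pi (fun _ : EdgeIdx m => bern q) ∧
      ρ.map Prod.snd = P.map (fun f (ij : EdgeIdx m) =>
        decide (∃ e : {e : ↥U × ↥U // (e.1 : ℤ) < (e.2 : ℤ)},
          (((e.1.1 : ℤ) ∈ S ij.1.1 ∧ (e.1.2 : ℤ) ∈ S ij.1.2) ∨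
           ((e.1.1 : ℤ) ∈ S ij.1.2 ∧ (e.1.2 : ℤ) ∈ S ij.1.1)) ∧ f e = true)) ∧
      ∀ᵐ z ∂ρ, ∀ e, z.1 e ≤ z.2 e := by
  subst hP hq
  exact main_aux S hdisj s hs hcard δ α D hδ hα hD U hU hdiam
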